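/- Let P_n(z) be defined by P_{-1}=0, P_0=1 and P_{n+1}(z) - P_n(z) = z(P_n(z) - ((n+1/2)^2/(n(n+1))) P_{n-1}(z)). Then P_n satisfies the reciprocal-invariance property z^n P_n(1/z) = P_n(z) for all n ≥ 0 and all z ≠ 0. -/
import Mathlib


theorem hermite_LBP_reciprocal_invariance (P : ℕ → ℝ → ℝ)
    (h0 : ∀ z : ℝ, P 0 z = 1)
    (h1 : ∀ z : ℝ, P 1 z - P 0 z = z * P 0 z)
    (hrec : ∀ n : ℕ, ∀ z : ℝ,
      P (n + 2) z - P (n + 1) z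
        = z * (P (n + 1) z -
            ((((n : ℝ) + 1) + 1 / 2) ^ 2 / (((n : ℝ) + 1) * ((n : ℝ) + 2))) * P n z)) :
    ∀ n : ℕ, ∀ z : ℝ, z ≠ 0 → z ^ n * P n (1 / z) = P n z := by
  intro n
  induction n using Nat.twoStepInduction with
  | zero => intro z hz; simp [h0]
  | one =>
    intro z hz
    have e1 := h1 z
    have e2 := h1 (1 / z)
    rw [h0] at e1 e2
    have : P 1 (1/z) = 1/z + 1 := by linarith
    rw [pow_one, this]
    field_simp
    linarith
  | more n ih1 ih2 =>
    intro z hz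
    have hq1 := ih1 z hz
    have hq2 := ih2 z hz
    have e1 := hrec n z
    have e2 := hrec n (1 / z)
    set b : ℝ := (((n : ℝ) + 1) + 1 / 2) ^ 2 / (((n : ℝ) + 1) * ((n : ℝ) + 2)) with hb
    have e2' : z * (P (n + 2) (1/z) - P (n + 1) (1/z))
        = P (n + 1) (1/z) - b * P n (1/z) := by
      rw [e2]; field_simp
    linear_combination z ^ (n + 1) * e2' + (z + 1) * hq2 - b * z * hq1 - e1
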